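/- Fix n and partition ℍ_n (vectors r ∈ ℕ^d with |r| = n) into sets 𝔸_t = {r ∈ ℍ_n : r₁ ∈ I_t}, where I₁, …, I_q partition {0,1,…,n} into q intervals. Let F_t = Σ_{r ∈ 𝔸_t} f_r with f_r r-functions, and Ψ = ∏_{t=1}^q (1 + ρ̃ F_t). Then ∫_{[0,1]^d} Ψ dx = 1. -/

import Mathlib

open MeasureTheory Set

/-- The dyadic interval `[j·2^k, (j+1)·2^k)`. -/
noncomputable def dyadicI (j k : ℤ) : Set ℝ :=
  Set.Ico ((j : ℝ) * 2 ^ k) (((j : ℝ) + 1) * 2 ^ k)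

/-- The left half of the dyadic interval `[j·2^k, (j+1)·2^k)`. -/
noncomputable def dyadicLeft (j k : ℤ) : Set ℝ :=
  Set.Ico ((j : ℝ) * 2 ^ k) ((j : ℝ) * 2 ^ k + 2 ^ (k - 1))

/-- The right half of the dyadic interval `[j·2^k, (j+1)·2^k)`. -/
noncomputable def dyadicRight (j k : ℤ) : Set ℝ :=
  Set.Ico ((j : ℝ) * 2 ^ k + 2 ^ (k - 1)) (((j : ℝ) + 1) * 2 ^ k)

/-- The `L^∞`-normalized Haar function of the dyadic interval `[j·2^k, (j+1)·2^k)`: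
`h_I = -𝟙_{I_left} + 𝟙_{I_right}`. -/
noncomputable def haar (j k : ℤ) (x : ℝ) : ℝ :=
  - (dyadicLeft j k).indicator (fun _ => (1 : ℝ)) x
  + (dyadicRight j k).indicator (fun _ => (1 : ℝ)) x

/-- The set `ℍ_n` of vectors `r ∈ ℕ^d` with `∑ r_t = n`, as a finset. -/
def Hset (d n : ℕ) : Finset (Fin d → ℕ) :=
  (Fintype.piFinset fun _ : Fin d => Finset.range (n + 1)).filter fun r => ∑ t, r t = n

lemma two_zpow_pos (k : ℤ) : (0:ℝ) < 2 ^ k := by positivity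

lemma two_zpow_succ (k : ℤ) : (2:ℝ) ^ k = 2 ^ (k-1) * 2 := by
  rw [← zpow_add_one₀ (two_ne_zero), sub_add_cancel]

lemma mem_dyadicI {j k : ℤ} {x : ℝ} :
    x ∈ dyadicI j k ↔ ((j:ℝ) * 2 ^ k ≤ x ∧ x < ((j:ℝ) + 1) * 2 ^ k) := Iff.rfl

lemma haar_measurable (j k : ℤ) : Measurable (haar j k) := by
  unfold haar
  exact ((measurable_const.indicator measurableSet_Ico).neg).add
    (measurable_const.indicator measurableSet_Ico)

lemma dyadicLeft_subset (j k : ℤ) : dyadicLeft j k ⊆ dyadicI j k := by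
  rintro x ⟨h1, h2⟩
  have h := two_zpow_succ k
  have hp : (0:ℝ) < 2 ^ (k-1) := two_zpow_pos _
  have he : ((j:ℝ)+1) * 2 ^ k = (j:ℝ) * 2 ^ k + 2 ^ k := by ring
  exact ⟨h1, by linarith⟩

lemma dyadicRight_subset (j k : ℤ) : dyadicRight j k ⊆ dyadicI j k := by
  rintro x ⟨h1, h2⟩
  have hp : (0:ℝ) < 2 ^ (k-1) := two_zpow_pos _
  exact ⟨by linarith, h2⟩

lemma haar_eq_zero {j k : ℤ} {x : ℝ} (h : x ∉ dyadicI j k) : haar j k x = 0 := by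
  unfold haar
  rw [Set.indicator_of_notMem (fun hx => h (dyadicLeft_subset j k hx)),
      Set.indicator_of_notMem (fun hx => h (dyadicRight_subset j k hx))]
  ring

lemma abs_haar_le (j k : ℤ) (x : ℝ) : |haar j k x| ≤ 1 := by
  classical
  unfold haar
  rw [Set.indicator_apply, Set.indicator_apply]
  split_ifs <;> norm_num

lemma dyadicLeft_eq (j k : ℤ) : dyadicLeft j k = dyadicI (2*j) (k-1) := by
  unfold dyadicLeft dyadicI
  have h := two_zpow_succ k
  congr 1 <;> · push_cast; rw [h]; ring

lemma dyadicRight_eq (j k : ℤ) : dyadicRight j k = dyadicI (2*j+1) (k-1) := by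
  unfold dyadicRight dyadicI
  have h := two_zpow_succ k
  congr 1 <;> · push_cast; rw [h]; ring

lemma dyadic_nested {j k j' k' : ℤ} (h : k ≤ k') :
    dyadicI j k ⊆ dyadicI j' k' ∨ Disjoint (dyadicI j k) (dyadicI j' k') := by
  set N : ℤ := 2 ^ (k' - k).toNat with hNdef
  have hN : ((N:ℤ) : ℝ) * 2 ^ k = 2 ^ k' := by
    have h1 : ((N : ℤ) : ℝ) = 2 ^ (((k' - k).toNat : ℕ) : ℤ) := by
      rw [hNdef]; push_cast; rw [zpow_natCast]
    rw [h1, ← zpow_add₀ (two_ne_zero : (2:ℝ) ≠ 0)]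
    congr 1
    omega
  have hk : (0:ℝ) < 2 ^ k := two_zpow_pos k
  by_cases h1 : j' * N ≤ j
  · by_cases h2 : j + 1 ≤ (j' + 1) * N
    · left
      rintro x ⟨hx1, hx2⟩
      constructor
      · have e : (j' : ℝ) * 2 ^ k' = ((j' * N : ℤ) : ℝ) * 2 ^ k := by
          push_cast; rw [mul_assoc, hN]
        rw [e]
        exact le_trans (mul_le_mul_of_nonneg_right (by exact_mod_cast h1) hk.le) hx1
      · have e : ((j' : ℝ) + 1) * 2 ^ k' = (((j' + 1) * N : ℤ) : ℝ) * 2 ^ k := by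
          push_cast; rw [mul_assoc, hN]
        rw [e]
        exact lt_of_lt_of_le hx2 (mul_le_mul_of_nonneg_right (by exact_mod_cast h2) hk.le)
    · right
      rw [Set.disjoint_left]
      rintro x ⟨hx1, hx2⟩ ⟨hy1, hy2⟩
      push_neg at h2
      have h2' : (j' + 1) * N ≤ j := Int.lt_add_one_iff.mp h2
      have e : (((j' : ℝ)) + 1) * 2 ^ k' ≤ (j:ℝ) * 2 ^ k := by
        have e1 : ((j' : ℝ) + 1) * 2 ^ k' = (((j' + 1) * N : ℤ) : ℝ) * 2 ^ k := by
          push_cast; rw [mul_assoc, hN]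
        rw [e1]
        exact mul_le_mul_of_nonneg_right (by exact_mod_cast h2') hk.le
      linarith
  · right
    rw [Set.disjoint_left]
    rintro x ⟨hx1, hx2⟩ ⟨hy1, hy2⟩
    push_neg at h1
    have h1' : j + 1 ≤ j' * N := Int.add_one_le_iff.mpr h1
    have e : ((j:ℝ) + 1) * 2 ^ k ≤ (j' : ℝ) * 2 ^ k' := by
      have e1 : (j' : ℝ) * 2 ^ k' = ((j' * N : ℤ) : ℝ) * 2 ^ k := by
        push_cast; rw [mul_assoc, hN]
      rw [e1]
      exact mul_le_mul_of_nonneg_right (by exact_mod_cast h1') hk.le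
    linarith

lemma haar_constOn {j k j' k' : ℤ} (h : k + 1 ≤ k') {x y : ℝ}
    (hx : x ∈ dyadicI j k) (hy : y ∈ dyadicI j k) : haar j' k' x = haar j' k' y := by
  have hL : x ∈ dyadicLeft j' k' ↔ y ∈ dyadicLeft j' k' := by
    rw [dyadicLeft_eq]
    rcases dyadic_nested (j := j) (j' := 2*j') (k := k) (k' := k'-1) (by omega) with hs | hdis
    · exact iff_of_true (hs hx) (hs hy)
    · exact iff_of_false (Set.disjoint_left.mp hdis hx) (Set.disjoint_left.mp hdis hy)
  have hR : x ∈ dyadicRight j' k' ↔ y ∈ dyadicRight j' k' := by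
    rw [dyadicRight_eq]
    rcases dyadic_nested (j := j) (j' := 2*j'+1) (k := k) (k' := k'-1) (by omega) with hs | hdis
    · exact iff_of_true (hs hx) (hs hy)
    · exact iff_of_false (Set.disjoint_left.mp hdis hx) (Set.disjoint_left.mp hdis hy)
  classical
  unfold haar
  rw [Set.indicator_apply, Set.indicator_apply, Set.indicator_apply, Set.indicator_apply,
    if_congr hL rfl rfl, if_congr hR rfl rfl]

lemma integral_haar {j : ℤ} {m : ℕ} (h0 : 0 ≤ j) (h1 : j + 1 ≤ 2 ^ m) :
    ∫ x in Ico (0:ℝ) 1, haar j (-(m:ℤ)) x = 0 := by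
  set k : ℤ := -(m:ℤ) with hk
  have hj0 : (0:ℝ) ≤ (j:ℝ) := by exact_mod_cast h0
  have hj1 : ((j:ℝ) + 1) * 2 ^ k ≤ 1 := by
    have h2 : ((j:ℝ) + 1) ≤ 2 ^ (m:ℤ) := by
      rw [zpow_natCast]; exact_mod_cast h1
    have h3 : (2:ℝ) ^ (m:ℤ) * 2 ^ k = 1 := by
      rw [← zpow_add₀ (two_ne_zero : (2:ℝ) ≠ 0)]; simp [hk]
    calc ((j:ℝ)+1) * 2 ^ k ≤ 2 ^ (m:ℤ) * 2 ^ k :=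
          mul_le_mul_of_nonneg_right h2 (two_zpow_pos k).le
    _ = 1 := h3
  have hLsub : dyadicLeft j k ⊆ Ico (0:ℝ) 1 := by
    intro x hx
    obtain ⟨a1, a2⟩ := dyadicLeft_subset j k hx
    exact ⟨le_trans (mul_nonneg hj0 (two_zpow_pos k).le) a1, lt_of_lt_of_le a2 hj1⟩
  have hRsub : dyadicRight j k ⊆ Ico (0:ℝ) 1 := by
    intro x hx
    obtain ⟨a1, a2⟩ := dyadicRight_subset j k hx
    exact ⟨le_trans (mul_nonneg hj0 (two_zpow_pos k).le) a1, lt_of_lt_of_le a2 hj1⟩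
  have hLm : MeasurableSet (dyadicLeft j k) := measurableSet_Ico
  have hRm : MeasurableSet (dyadicRight j k) := measurableSet_Ico
  have hvL : (volume.restrict (Ico (0:ℝ) 1)) (dyadicLeft j k) = ENNReal.ofReal (2 ^ (k-1)) := by
    rw [Measure.restrict_apply hLm, Set.inter_eq_self_of_subset_left hLsub]
    unfold dyadicLeft
    rw [Real.volume_Ico]
    congr 1
    ring
  have hvR : (volume.restrict (Ico (0:ℝ) 1)) (dyadicRight j k) = ENNReal.ofReal (2 ^ (k-1)) := by
    rw [Measure.restrict_apply hRm, Set.inter_eq_self_of_subset_left hRsub]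
    unfold dyadicRight
    rw [Real.volume_Ico]
    congr 1
    rw [two_zpow_succ k]
    ring
  have iL : Integrable ((dyadicLeft j k).indicator fun _ => (1:ℝ))
      (volume.restrict (Ico (0:ℝ) 1)) := (integrable_const (1:ℝ)).indicator hLm
  have iR : Integrable ((dyadicRight j k).indicator fun _ => (1:ℝ))
      (volume.restrict (Ico (0:ℝ) 1)) := (integrable_const (1:ℝ)).indicator hRm
  unfold haar
  simp only [neg_add_eq_sub]
  rw [integral_sub iR iL, integral_indicator_const _ hLm,
    integral_indicator_const _ hRm, measureReal_def, measureReal_def, hvL, hvR, sub_self]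

lemma key1d {ι : Type*} [DecidableEq ι] (T : Finset ι) (hT : T.Nonempty) (k : ι → ℕ) (a : ι → ℤ)
    (hinj : ∀ t ∈ T, ∀ t' ∈ T, t ≠ t' → k t ≠ k t')
    (ha0 : ∀ t ∈ T, 0 ≤ a t) (ha1 : ∀ t ∈ T, a t + 1 ≤ 2 ^ k t) :
    ∫ x in Ico (0:ℝ) 1, ∏ t ∈ T, haar (a t) (-(k t : ℤ)) x = 0 := by
  obtain ⟨t₀, ht₀, hmax⟩ := T.exists_max_image k hT
  set x₀ : ℝ := (a t₀ : ℝ) * 2 ^ (-(k t₀ : ℤ)) with hx₀def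
  have hx₀ : x₀ ∈ dyadicI (a t₀) (-(k t₀ : ℤ)) := by
    rw [mem_dyadicI]
    refine ⟨le_refl _, ?_⟩
    nlinarith [two_zpow_pos (-(k t₀ : ℤ))]
  set C : ℝ := ∏ t ∈ T.erase t₀, haar (a t) (-(k t : ℤ)) x₀ with hC
  have hpt : ∀ x : ℝ, ∏ t ∈ T, haar (a t) (-(k t:ℤ)) x = C * haar (a t₀) (-(k t₀:ℤ)) x := by
    intro x
    by_cases hx : x ∈ dyadicI (a t₀) (-(k t₀:ℤ))
    · rw [← Finset.prod_erase_mul T _ ht₀]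
      congr 1
      rw [hC]
      refine Finset.prod_congr rfl fun t ht => ?_
      have htT := Finset.mem_of_mem_erase ht
      have hne : t ≠ t₀ := Finset.ne_of_mem_erase ht
      have hlt : k t < k t₀ := lt_of_le_of_ne (hmax t htT) (hinj t htT t₀ ht₀ hne)
      exact haar_constOn (by omega) hx hx₀
    · rw [haar_eq_zero hx, mul_zero]
      exact Finset.prod_eq_zero ht₀ (haar_eq_zero hx)
  simp_rw [hpt]
  rw [integral_const_mul, integral_haar (ha0 t₀ ht₀) (ha1 t₀ ht₀), mul_zero]



section Main

variable {d n q : ℕ}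

lemma box_factor {d : ℕ} (g : Fin d → ℝ → ℝ) :
    ∫ x in Set.univ.pi (fun _ : Fin d => Set.Ico (0:ℝ) 1), ∏ i, g i (x i)
      = ∏ i, ∫ y in Set.Ico (0:ℝ) 1, g i y := by
  rw [← integral_indicator (MeasurableSet.univ_pi fun _ => measurableSet_Ico)]
  have h : ((Set.univ.pi fun _ : Fin d => Set.Ico (0:ℝ) 1).indicator fun x => ∏ i, g i (x i))
      = fun x => ∏ i, (Set.Ico (0:ℝ) 1).indicator (g i) (x i) := by
    funext x
    by_cases hx : x ∈ Set.univ.pi fun _ : Fin d => Set.Ico (0:ℝ) 1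
    · rw [Set.indicator_of_mem hx]
      exact Finset.prod_congr rfl fun i _ =>
        (Set.indicator_of_mem (hx i (Set.mem_univ i)) _).symm
    · rw [Set.indicator_of_notMem hx]
      rw [Set.mem_univ_pi] at hx
      push_neg at hx
      obtain ⟨i, hi⟩ := hx
      symm
      exact Finset.prod_eq_zero (Finset.mem_univ i) (Set.indicator_of_notMem hi _)
  rw [h, volume_pi]
  beta_reduce
  rw [MeasureTheory.integral_fintype_prod_eq_prod (ι := Fin d)
    (fun i => (Set.Ico (0:ℝ) 1).indicator (g i))]
  exact Finset.prod_congr rfl fun i _ => integral_indicator measurableSet_Ico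

end Main

noncomputable def rfun (d : ℕ) (ε : ∀ r : Fin d → ℕ, (∀ t, Fin (2 ^ r t)) → ℝ)
    (p : (r : Fin d → ℕ) × ((i : Fin d) → Fin (2 ^ r i))) (x : Fin d → ℝ) : ℝ :=
  ε p.1 p.2 * ∏ i, haar ((p.2 i : ℕ) : ℤ) (-(p.1 i : ℤ)) (x i)

noncomputable def Aset (d n : ℕ) (hd : 0 < d) (c : ℕ → ℕ) (t : ℕ) :
    Finset ((r : Fin d → ℕ) × ((i : Fin d) → Fin (2 ^ r i))) :=
  ((Hset d n).filter fun r => c t ≤ r ⟨0, hd⟩ ∧ r ⟨0, hd⟩ < c (t + 1)).sigma fun _ => Finset.univ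

/-- Partition `{0,…,n}` into `q` intervals `I_t = [c t, c (t+1))`, let
`𝔸_t = {r ∈ ℍ_n : r₁ ∈ I_t}`, `F_t = Σ_{r ∈ 𝔸_t} f_r` with `f_r` r-functions, and
`Ψ = ∏_{t=1}^q (1 + ρ̃ F_t)`.  Then `∫_{[0,1]^d} Ψ = 1`. -/
theorem stmt18 (d n q : ℕ) (hd : 0 < d) (hq : 0 < q) (ρ : ℝ) (hρ : 0 < ρ)
    (c : ℕ → ℕ) (hc0 : c 0 = 0) (hcq : c q = n + 1) (hmono : ∀ t < q, c t < c (t + 1))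
    (ε : ∀ r : Fin d → ℕ, (∀ t, Fin (2 ^ r t)) → ℝ)
    (hε : ∀ r a, ε r a = 1 ∨ ε r a = -1)
    (F : ℕ → (Fin d → ℝ) → ℝ)
    (hF : ∀ t x, F t x =
      ∑ r ∈ (Hset d n).filter fun r => c t ≤ r ⟨0, hd⟩ ∧ r ⟨0, hd⟩ < c (t + 1),
        ∑ a : ∀ i, Fin (2 ^ r i),
          ε r a * ∏ i, haar ((a i : ℕ) : ℤ) (-(r i : ℤ)) (x i)) :
    (∫ x in Set.univ.pi fun _ : Fin d => Set.Ico (0 : ℝ) 1,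
      ∏ t ∈ Finset.range q, (1 + ρ * F t x)) = 1 := by
  have hboxm : MeasurableSet (Set.univ.pi fun _ : Fin d => Set.Ico (0:ℝ) 1) :=
    MeasurableSet.univ_pi fun _ => measurableSet_Ico
  have hboxvol : volume (Set.univ.pi fun _ : Fin d => Set.Ico (0:ℝ) 1) = 1 := by
    rw [volume_pi_pi]
    simp [Real.volume_Ico]
  haveI hfin : IsFiniteMeasure
      (volume.restrict (Set.univ.pi fun _ : Fin d => Set.Ico (0:ℝ) 1)) := by
    constructor
    rw [Measure.restrict_apply_univ, hboxvol]
    exact ENNReal.one_lt_top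
  -- monotonicity of c
  have hcmono : ∀ s s' : ℕ, s ≤ s' → s' ≤ q → c s ≤ c s' := by
    intro s s'
    induction s' with
    | zero => intro hss _; exact le_of_eq (congrArg c (Nat.le_zero.mp hss))
    | succ m ih =>
        intro hss hsq
        rcases Nat.eq_or_lt_of_le hss with rfl | hlt
        · exact le_rfl
        · exact le_trans (ih (Nat.lt_succ_iff.mp hlt) (by omega)) ((hmono m (by omega)).le)
  -- basic facts about rfun
  have meas_rfun : ∀ p, Measurable (rfun d ε p) := by
    intro p
    exact (Finset.measurable_prod Finset.univ fun i _ =>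
      (haar_measurable _ _).comp (measurable_pi_apply i)).const_mul _
  have habs : ∀ p x, |rfun d ε p x| ≤ 1 := by
    intro p x
    rw [rfun, abs_mul]
    have h1 : |ε p.1 p.2| = 1 := by rcases hε p.1 p.2 with h | h <;> rw [h] <;> norm_num
    rw [h1, one_mul, Finset.abs_prod]
    exact Finset.prod_le_one (fun i _ => abs_nonneg _) (fun i _ => abs_haar_le _ _ _)
  have hFt : ∀ t x, F t x = ∑ p ∈ Aset d n hd c t, rfun d ε p x := by
    intro t x
    rw [hF, Aset, Finset.sum_sigma]
    rfl
  have measFt : ∀ t, Measurable (F t) := by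
    intro t
    have he : F t = fun x => ∑ p ∈ Aset d n hd c t, rfun d ε p x := funext fun x => hFt t x
    rw [he]
    exact Finset.measurable_sum _ fun p _ => meas_rfun p
  have boundFt : ∀ t x, |F t x| ≤ ((Aset d n hd c t).card : ℝ) := by
    intro t x
    rw [hFt]
    refine le_trans (Finset.abs_sum_le_sum_abs _ _) ?_
    calc ∑ p ∈ Aset d n hd c t, |rfun d ε p x| ≤ ∑ p ∈ Aset d n hd c t, (1:ℝ) :=
          Finset.sum_le_sum fun p _ => habs p x
    _ = ((Aset d n hd c t).card : ℝ) := by simp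
  have integrable_of_bdd : ∀ (f : (Fin d → ℝ) → ℝ), Measurable f → ∀ C : ℝ, (∀ x, |f x| ≤ C) →
      Integrable f (volume.restrict (Set.univ.pi fun _ : Fin d => Set.Ico (0:ℝ) 1)) := by
    intro f hm C hC
    exact Integrable.mono' (integrable_const C) hm.aestronglyMeasurable
      (Filter.Eventually.of_forall fun x => by simpa [Real.norm_eq_abs] using hC x)
  -- the key vanishing lemma
  have hzero : ∀ T : Finset ℕ, T ⊆ Finset.range q → T.Nonempty →
      (∫ x in Set.univ.pi fun _ : Fin d => Set.Ico (0:ℝ) 1, ∏ t ∈ T, (ρ * F t x)) = 0 := by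
    intro T hTsub hTne
    have h1 : ∀ x : Fin d → ℝ, ∏ t ∈ T, (ρ * F t x) = ρ ^ T.card * ∏ t ∈ T, F t x := by
      intro x; rw [Finset.prod_mul_distrib, Finset.prod_const]
    simp only [h1]
    rw [integral_const_mul]
    suffices h : (∫ x in Set.univ.pi fun _ : Fin d => Set.Ico (0:ℝ) 1,
        ∏ t ∈ T, F t x) = 0 by rw [h, mul_zero]
    have h2 : ∀ x : Fin d → ℝ, ∏ t ∈ T, F t x
        = ∑ γ ∈ T.pi (fun t => Aset d n hd c t),
            ∏ t ∈ T.attach, rfun d ε (γ t.1 t.2) x := by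
      intro x
      simp only [hFt]
      exact Finset.prod_sum T (fun t => Aset d n hd c t) (fun t p => rfun d ε p x)
    simp only [h2]
    rw [integral_finset_sum]
    · refine Finset.sum_eq_zero fun γ hγ => ?_
      have hγ' := Finset.mem_pi.mp hγ
      have hmem : ∀ (t : {x // x ∈ T}),
          c t.1 ≤ (γ t.1 t.2).1 ⟨0, hd⟩ ∧ (γ t.1 t.2).1 ⟨0, hd⟩ < c (t.1 + 1) := by
        intro t
        have h3 := hγ' t.1 t.2
        rw [Aset, Finset.mem_sigma] at h3
        exact (Finset.mem_filter.mp h3.1).2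
      have hlt : ∀ (t t' : {x // x ∈ T}), t.1 < t'.1 →
          (γ t.1 t.2).1 ⟨0, hd⟩ < (γ t'.1 t'.2).1 ⟨0, hd⟩ := by
        intro t t' h
        have h3 := (hmem t).2
        have h4 := (hmem t').1
        have h5 : c (t.1 + 1) ≤ c t'.1 :=
          hcmono _ _ h (le_of_lt (Finset.mem_range.mp (hTsub t'.2)))
        omega
      have h3 : ∀ x : Fin d → ℝ, ∏ t ∈ T.attach, rfun d ε (γ t.1 t.2) x
          = (∏ t ∈ T.attach, ε (γ t.1 t.2).1 (γ t.1 t.2).2)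
            * ∏ i : Fin d, ∏ t ∈ T.attach,
                haar (((γ t.1 t.2).2 i : ℕ) : ℤ) (-((γ t.1 t.2).1 i : ℤ)) (x i) := by
        intro x
        simp only [rfun]
        rw [Finset.prod_mul_distrib]
        congr 1
        exact Finset.prod_comm
      simp only [h3]
      rw [integral_const_mul,
        box_factor (fun i y => ∏ t ∈ T.attach,
          haar (((γ t.1 t.2).2 i : ℕ) : ℤ) (-((γ t.1 t.2).1 i : ℤ)) y)]
      have hfac0 : (∫ y in Set.Ico (0:ℝ) 1, ∏ t ∈ T.attach,
          haar (((γ t.1 t.2).2 ⟨0, hd⟩ : ℕ) : ℤ) (-((γ t.1 t.2).1 ⟨0, hd⟩ : ℤ)) y) = 0 := by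
        refine key1d T.attach (Finset.attach_nonempty_iff.mpr hTne)
          (fun t => (γ t.1 t.2).1 ⟨0, hd⟩) (fun t => (((γ t.1 t.2).2 ⟨0, hd⟩ : ℕ) : ℤ))
          ?_ ?_ ?_
        · intro t _ t' _ hne
          have hne' : t.1 ≠ t'.1 := fun h => hne (Subtype.ext h)
          rcases lt_or_gt_of_ne hne' with h | h
          · exact Nat.ne_of_lt (hlt t t' h)
          · exact (Nat.ne_of_lt (hlt t' t h)).symm
        · intro t _
          exact Int.natCast_nonneg _
        · intro t _
          have h2 : (((γ t.1 t.2).2 ⟨0, hd⟩ : ℕ) + 1 : ℕ) ≤ 2 ^ ((γ t.1 t.2).1 ⟨0, hd⟩) :=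
            ((γ t.1 t.2).2 ⟨0, hd⟩).is_lt
          beta_reduce
          exact_mod_cast h2
      rw [Finset.prod_eq_zero (Finset.mem_univ (⟨0, hd⟩ : Fin d)) hfac0, mul_zero]
    · intro γ hγ
      refine integrable_of_bdd _ ?_ 1 ?_
      · exact Finset.measurable_prod _ fun t _ => meas_rfun _
      · intro x
        rw [Finset.abs_prod]
        exact Finset.prod_le_one (fun t _ => abs_nonneg _) (fun t _ => habs _ x)
  -- expansion of the product
  have hexp : ∀ x : Fin d → ℝ, ∏ t ∈ Finset.range q, (1 + ρ * F t x)
      = ∑ S ∈ (Finset.range q).powerset, ∏ t ∈ Finset.range q \ S, (ρ * F t x) := by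
    intro x
    rw [Finset.prod_add]
    exact Finset.sum_congr rfl fun S hS => by rw [Finset.prod_const_one, one_mul]
  simp only [hexp]
  rw [integral_finset_sum]
  · rw [Finset.sum_eq_single (Finset.range q)]
    · rw [Finset.sdiff_self]
      simp only [Finset.prod_empty]
      rw [setIntegral_const, measureReal_def, hboxvol]
      simp
    · intro S hS hne
      refine hzero _ (Finset.sdiff_subset) ?_
      rw [Finset.sdiff_nonempty]
      intro hsub
      exact hne (Finset.Subset.antisymm (Finset.mem_powerset.mp hS) hsub)
    · intro h
      exact absurd (Finset.mem_powerset_self _) h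
  · intro S hS
    refine integrable_of_bdd _ ?_ (∏ t ∈ Finset.range q \ S, (|ρ| * ((Aset d n hd c t).card : ℝ))) ?_
    · exact Finset.measurable_prod _ fun t _ => (measFt t).const_mul ρ
    · intro x
      rw [Finset.abs_prod]
      refine Finset.prod_le_prod (fun t _ => abs_nonneg _) (fun t _ => ?_)
      rw [abs_mul]
      exact mul_le_mul_of_nonneg_left (boundFt t x) (abs_nonneg ρ)
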